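/- Let π be a policy satisfying the visitation density bounds p_lb(s,a) ≤ p^π(s,a) ≤ p_ub(s,a) for all s,a, and let (v*, q*, r_lb*, r_ub*) be an optimal solution of the bounded policy-evaluation primal LP for π. Then r_lb*(s,a) = 0 for every (s,a) with p_lb(s,a) < p^π(s,a), and r_ub*(s,a) = 0 for every (s,a) with p^π(s,a) < p_ub(s,a); that is, the optimal modified reward is only altered at tight bounds. -/

import Mathlib

open Finset

section MDPDefs

variable {S A : Type*}

/-- A (stationary, stochastic) policy on finite state/action spaces. -/
def IsPolicy [Fintype A] (π : S → A → ℝ) : Prop :=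
  (∀ s a, 0 ≤ π s a) ∧ ∀ s, ∑ a, π s a = 1

/-- `d` is the (discounted) state visitation density of the policy `π`:
it satisfies `d(s) = (1-γ)ι(s) + γ Σ_{s',a'} d(s') π(a'|s') τ(s|s',a')`. -/
def IsVisit [Fintype S] [Fintype A] (ι : S → ℝ) (τ : S → A → S → ℝ) (γ : ℝ)
    (π : S → A → ℝ) (d : S → ℝ) : Prop :=
  ∀ s, d s = (1 - γ) * ι s + γ * ∑ s', ∑ a', d s' * π s' a' * τ s' a' s

/-- Feasibility for the value-learning dual LP. -/
def DualFeas [Fintype S] [Fintype A] (ι : S → ℝ) (τ : S → A → S → ℝ) (γ : ℝ)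
    (d : S → ℝ) (p : S → A → ℝ) : Prop :=
  (∀ s, ∑ a, p s a = d s) ∧
  (∀ s, d s = (1 - γ) * ι s + γ * ∑ s', ∑ a', p s' a' * τ s' a' s) ∧
  ∀ s a, 0 ≤ p s a

/-- The dual objective: the average reward under the state-action density `p`,
`Σ_{s,a} p(s,a) Σ_{s'} τ(s'|s,a) r(s,a,s')`. -/
def DualObj [Fintype S] [Fintype A] (τ : S → A → S → ℝ) (r : S → A → S → ℝ)
    (p : S → A → ℝ) : ℝ :=
  ∑ s, ∑ a, p s a * ∑ s', τ s a s' * r s a s'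

/-- The standing MDP assumptions: `ι` is an everywhere-positive initial-state
distribution, `τ(·|s,a)` are transition probabilities and `γ ∈ [0,1)`. -/
def IsMDP [Fintype S] [Fintype A] (ι : S → ℝ) (τ : S → A → S → ℝ) (γ : ℝ) : Prop :=
  (∀ s, 0 < ι s) ∧ (∑ s, ι s = 1) ∧
  (∀ s a s', 0 ≤ τ s a s') ∧ (∀ s a, ∑ s', τ s a s' = 1) ∧
  0 ≤ γ ∧ γ < 1

end MDPDefs


private lemma sum_swap_mul3 {S A : Type*} [Fintype S] [Fintype A] (N : Finset S)
    (f : S → A → ℝ) (g : S → A → S → ℝ) :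
    ∑ s ∈ N, ∑ s', ∑ a', f s' a' * g s' a' s
      = ∑ s', ∑ a', f s' a' * ∑ s ∈ N, g s' a' s := by
  rw [show (∑ s ∈ N, ∑ s', ∑ a', f s' a' * g s' a' s)
      = ∑ s', ∑ s ∈ N, ∑ a', f s' a' * g s' a' s from Finset.sum_comm]
  refine Finset.sum_congr rfl fun s' _ => ?_
  rw [show (∑ s ∈ N, ∑ a', f s' a' * g s' a' s)
      = ∑ a', ∑ s ∈ N, f s' a' * g s' a' s from Finset.sum_comm]
  exact Finset.sum_congr rfl fun a' _ => (Finset.mul_sum _ _ _).symm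

/-- if the policy `π` satisfies the visitation density bounds, then an
optimal solution of the bounded policy-evaluation primal LP for `π` has vanishing reward
modifications at all non-tight bounds: `r_lb*(s,a) = 0` wherever `p_lb(s,a) < p^π(s,a)`
and `r_ub*(s,a) = 0` wherever `p^π(s,a) < p_ub(s,a)`. -/
theorem vdb_reward_modifications_tight_only
    {S A : Type*} [Fintype S] [Fintype A] [Nonempty S] [Nonempty A]
    (ι : S → ℝ) (τ : S → A → S → ℝ) (γ : ℝ) (r : S → A → S → ℝ)
    (hMDP : IsMDP ι τ γ)
    (plb pub : S → A → ℝ) (hb0 : ∀ s a, 0 ≤ plb s a) (hb1 : ∀ s a, plb s a ≤ pub s a)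
    (π : S → A → ℝ) (hPol : IsPolicy π)
    (dπ : S → ℝ) (hVisit : IsVisit ι τ γ π dπ)
    (hSat : ∀ s a, plb s a ≤ dπ s * π s a ∧ dπ s * π s a ≤ pub s a)
    (vStar : S → ℝ) (qStar rlbStar rubStar : S → A → ℝ)
    (hFeas : (∀ s, ∑ a, π s a * qStar s a ≤ vStar s) ∧
      (∀ s a, qStar s a = ∑ s', τ s a s' *
        (r s a s' + rlbStar s a - rubStar s a + γ * vStar s')) ∧
      (∀ s a, 0 ≤ rlbStar s a) ∧ ∀ s a, 0 ≤ rubStar s a)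
    (hOpt : ∀ (v : S → ℝ) (q rlb rub : S → A → ℝ),
      ((∀ s, ∑ a, π s a * q s a ≤ v s) ∧
        (∀ s a, q s a = ∑ s', τ s a s' *
          (r s a s' + rlb s a - rub s a + γ * v s')) ∧
        (∀ s a, 0 ≤ rlb s a) ∧ ∀ s a, 0 ≤ rub s a) →
      (∑ s, ι s * ((1 - γ) * vStar s)) - (∑ s, ∑ a, rlbStar s a * plb s a) +
          (∑ s, ∑ a, rubStar s a * pub s a) ≤
        (∑ s, ι s * ((1 - γ) * v s)) - (∑ s, ∑ a, rlb s a * plb s a) +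
          (∑ s, ∑ a, rub s a * pub s a)) :
    (∀ s a, plb s a < dπ s * π s a → rlbStar s a = 0) ∧
    (∀ s a, dπ s * π s a < pub s a → rubStar s a = 0) := by
  
  classical
  obtain ⟨hι, hιsum, hτ0, hτ1, hγ0, hγ1⟩ := hMDP
  obtain ⟨hπ0, hπ1⟩ := hPol
  obtain ⟨hfv, hfq, hfl, hfu⟩ := hFeas
  set p : S → A → ℝ := fun s a => dπ s * π s a with hp
  -- visitation density is nonnegative
  have hd0 : ∀ s, 0 ≤ dπ s := by
    by_contra h
    push_neg at h
    set N : Finset S := univ.filter (fun s => dπ s < 0) with hN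
    have hNne : N.Nonempty := by
      obtain ⟨s, hs⟩ := h; exact ⟨s, by simp [hN, hs]⟩
    have ht : ∑ s ∈ N, dπ s
        = (1 - γ) * ∑ s ∈ N, ι s
          + γ * ∑ s', ∑ a', dπ s' * π s' a' * ∑ s ∈ N, τ s' a' s := by
      calc ∑ s ∈ N, dπ s
          = ∑ s ∈ N, ((1 - γ) * ι s + γ * ∑ s', ∑ a', dπ s' * π s' a' * τ s' a' s) :=
            sum_congr rfl (fun s _ => hVisit s)
        _ = (∑ s ∈ N, (1 - γ) * ι s)
            + ∑ s ∈ N, γ * ∑ s', ∑ a', dπ s' * π s' a' * τ s' a' s := by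
            rw [Finset.sum_add_distrib]
        _ = (1 - γ) * ∑ s ∈ N, ι s
            + γ * ∑ s ∈ N, ∑ s', ∑ a', dπ s' * π s' a' * τ s' a' s := by
            rw [Finset.mul_sum, Finset.mul_sum]
        _ = (1 - γ) * ∑ s ∈ N, ι s
            + γ * ∑ s', ∑ a', dπ s' * π s' a' * ∑ s ∈ N, τ s' a' s := by
            congr 2
            exact sum_swap_mul3 N (fun s' a' => dπ s' * π s' a') τ
    have hbound : ∑ s' ∈ N, dπ s'
        ≤ ∑ s', ∑ a', dπ s' * π s' a' * ∑ s ∈ N, τ s' a' s := by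
      have h1 : ∑ s' ∈ N, dπ s'
          = ∑ s', ∑ a', (if dπ s' < 0 then dπ s' * π s' a' else 0) := by
        rw [Finset.sum_filter]
        refine Finset.sum_congr rfl (fun s' _ => ?_)
        by_cases hc : dπ s' < 0 <;> simp [hc, ← Finset.mul_sum, hπ1 s']
      rw [h1]
      refine Finset.sum_le_sum (fun s' _ => Finset.sum_le_sum (fun a' _ => ?_))
      have hτN0 : 0 ≤ ∑ s ∈ N, τ s' a' s :=
        Finset.sum_nonneg (fun s _ => hτ0 s' a' s)
      have hτN1 : ∑ s ∈ N, τ s' a' s ≤ 1 := by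
        rw [← hτ1 s' a']
        exact Finset.sum_le_sum_of_subset_of_nonneg (Finset.subset_univ N)
          (fun s _ _ => hτ0 s' a' s)
      by_cases hc : dπ s' < 0
      · simp only [hc, if_pos]
        have hnp : dπ s' * π s' a' ≤ 0 :=
          mul_nonpos_of_nonpos_of_nonneg hc.le (hπ0 s' a')
        nlinarith
      · simp only [hc, if_neg, not_false_iff]
        push_neg at hc
        exact mul_nonneg (mul_nonneg hc (hπ0 s' a')) hτN0
    have htneg : ∑ s ∈ N, dπ s < 0 := by
      refine Finset.sum_neg (fun s hs => ?_) hNne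
      exact (Finset.mem_filter.mp hs).2
    have hιN : 0 < ∑ s ∈ N, ι s :=
      Finset.sum_pos (fun s _ => hι s) hNne
    nlinarith [ht, hbound, htneg, hιN]
  -- existence of the value function of π
  obtain ⟨vb, hvb⟩ : ∃ v : S → ℝ,
      ∀ s, v s = ∑ a, π s a * ∑ s', τ s a s' * (r s a s' + γ * v s') := by
    set M : Matrix S S ℝ := fun s s' => γ * ∑ a, π s a * τ s a s' with hM
    have hM0 : ∀ s s', 0 ≤ M s s' := fun s s' =>
      mul_nonneg hγ0 (Finset.sum_nonneg fun a _ => mul_nonneg (hπ0 s a) (hτ0 s a s'))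
    have hrow : ∀ s, ∑ s', M s s' = γ := by
      intro s
      calc ∑ s', M s s' = γ * ∑ s', ∑ a, π s a * τ s a s' := by
            simp only [hM]; rw [Finset.mul_sum]
        _ = γ * ∑ a, π s a * ∑ s', τ s a s' := by
            rw [show (∑ s', ∑ a, π s a * τ s a s') = ∑ a, ∑ s', π s a * τ s a s'
              from Finset.sum_comm]
            exact congrArg _ (Finset.sum_congr rfl fun a _ => (Finset.mul_sum _ _ _).symm)
        _ = γ := by simp only [hτ1, mul_one, hπ1 s]
    have hinj : Function.Injective (1 - M).mulVecLin := by
      rw [← LinearMap.ker_eq_bot, LinearMap.ker_eq_bot']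
      intro v hv
      have hv' : (1 - M).mulVec v = 0 := by
        rw [← Matrix.mulVecLin_apply]; exact hv
      have hveq : ∀ s, v s = ∑ s', M s s' * v s' := by
        intro s
        have h0 : (1 - M).mulVec v s = 0 := by rw [hv']; rfl
        rw [Matrix.sub_mulVec, Matrix.one_mulVec] at h0
        have h1 : (M.mulVec v) s = ∑ s', M s s' * v s' := rfl
        have h2 := congrFun (rfl : (1 : S → ℝ) = 1) s
        simp only [Pi.sub_apply] at h0
        rw [h1] at h0
        linarith
      obtain ⟨s0, _, hmax⟩ := Finset.exists_max_image univ (fun s => |v s|) univ_nonempty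
      have hs0 : |v s0| ≤ γ * |v s0| := by
        calc |v s0| = |∑ s', M s0 s' * v s'| := by rw [← hveq s0]
          _ ≤ ∑ s', |M s0 s' * v s'| := Finset.abs_sum_le_sum_abs _ _
          _ ≤ ∑ s', M s0 s' * |v s0| := by
              refine Finset.sum_le_sum fun s' _ => ?_
              rw [abs_mul, abs_of_nonneg (hM0 s0 s')]
              exact mul_le_mul_of_nonneg_left (hmax s' (mem_univ s')) (hM0 s0 s')
          _ = γ * |v s0| := by rw [← Finset.sum_mul, hrow s0]
      have hz : |v s0| = 0 := le_antisymm (by nlinarith [abs_nonneg (v s0)]) (abs_nonneg _)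
      funext s
      have := hmax s (mem_univ s)
      rw [hz] at this
      simpa using abs_nonpos_iff.mp this
    have hsurj : Function.Surjective (1 - M).mulVecLin :=
      LinearMap.injective_iff_surjective.mp hinj
    obtain ⟨v, hveq⟩ := hsurj (fun s => ∑ a, π s a * ∑ s', τ s a s' * r s a s')
    refine ⟨v, fun s => ?_⟩
    have h1 : v s - ∑ s', M s s' * v s' = ∑ a, π s a * ∑ s', τ s a s' * r s a s' := by
      have h0 := congrFun hveq s
      simp only [Matrix.mulVecLin_apply, Matrix.sub_mulVec, Matrix.one_mulVec,
        Pi.sub_apply] at h0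
      have h2 : (M.mulVec v) s = ∑ s', M s s' * v s' := rfl
      rw [h2] at h0
      linarith [h0]
    have h2 : ∑ s', M s s' * v s' = ∑ a, π s a * ∑ s', τ s a s' * (γ * v s') := by
      calc ∑ s', M s s' * v s'
          = ∑ s', ∑ a, π s a * (τ s a s' * (γ * v s')) := by
            simp only [hM, Finset.sum_mul, Finset.mul_sum]
            exact Finset.sum_congr rfl fun s' _ => Finset.sum_congr rfl fun a _ => by ring
        _ = ∑ a, ∑ s', π s a * (τ s a s' * (γ * v s')) := Finset.sum_comm
        _ = ∑ a, π s a * ∑ s', τ s a s' * (γ * v s') :=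
            Finset.sum_congr rfl fun a _ => (Finset.mul_sum _ _ _).symm
    have h3 : ∑ a, π s a * ∑ s', τ s a s' * (r s a s' + γ * v s')
        = (∑ a, π s a * ∑ s', τ s a s' * r s a s')
          + ∑ a, π s a * ∑ s', τ s a s' * (γ * v s') := by
      rw [← Finset.sum_add_distrib]
      refine Finset.sum_congr rfl fun a _ => ?_
      rw [← mul_add, ← Finset.sum_add_distrib]
      congr 2
      exact funext fun s' => by ring
    rw [h3, ← h1, ← h2]
    ring
  -- the dual objective value
  set K : ℝ := ∑ s, ∑ a, p s a * ∑ s', τ s a s' * r s a s' with hK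
  -- flow identity
  have hflow : ∀ v : S → ℝ, ∑ s, ι s * ((1 - γ) * v s)
      = (∑ s, dπ s * v s) - γ * ∑ s, ∑ a, p s a * ∑ s', τ s a s' * v s' := by
    intro v
    have h1 : ∀ s, ι s * ((1 - γ) * v s)
        = dπ s * v s - γ * ((∑ s', ∑ a', p s' a' * τ s' a' s) * v s) := by
      intro s
      have hv := hVisit s
      simp only [hp]
      linear_combination (-(v s)) * hv
    rw [Finset.sum_congr rfl (fun s _ => h1 s), Finset.sum_sub_distrib, ← Finset.mul_sum]
    congr 2
    calc ∑ s, (∑ s', ∑ a', p s' a' * τ s' a' s) * v s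
        = ∑ s, ∑ s', ∑ a', p s' a' * τ s' a' s * v s := by
          simp only [Finset.sum_mul, mul_assoc]
      _ = ∑ s', ∑ s, ∑ a', p s' a' * τ s' a' s * v s := Finset.sum_comm
      _ = ∑ s', ∑ a', ∑ s, p s' a' * τ s' a' s * v s :=
          Finset.sum_congr rfl fun s' _ => Finset.sum_comm
      _ = ∑ s', ∑ a', p s' a' * ∑ s, τ s' a' s * v s := by
          simp only [Finset.mul_sum, mul_assoc]
  -- the key duality identity
  have key : ∀ (v : S → ℝ) (q rlb rub : S → A → ℝ),
      (∀ s a, q s a = ∑ s', τ s a s' * (r s a s' + rlb s a - rub s a + γ * v s')) →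
      (∑ s, ι s * ((1 - γ) * v s)) - (∑ s, ∑ a, rlb s a * plb s a)
          + (∑ s, ∑ a, rub s a * pub s a)
        = K + (∑ s, dπ s * (v s - ∑ a, π s a * q s a))
          + ∑ s, ∑ a, (rlb s a * (p s a - plb s a) + rub s a * (pub s a - p s a)) := by
    intro v q rlb rub hq
    have hexp : ∀ s a, p s a * q s a
        = p s a * (∑ s', τ s a s' * r s a s') + p s a * rlb s a - p s a * rub s a
          + γ * (p s a * ∑ s', τ s a s' * v s') := by
      intro s a
      rw [hq s a]
      have hsplit : ∑ s', τ s a s' * (r s a s' + rlb s a - rub s a + γ * v s')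
          = (∑ s', τ s a s' * r s a s') + (rlb s a - rub s a) * (∑ s', τ s a s')
            + γ * ∑ s', τ s a s' * v s' := by
        rw [Finset.mul_sum, Finset.mul_sum, ← Finset.sum_add_distrib, ← Finset.sum_add_distrib]
        exact Finset.sum_congr rfl fun s' _ => by ring
      rw [hsplit, hτ1 s a]
      ring
    have h2 : ∑ s, ∑ a, p s a * q s a
        = K + (∑ s, ∑ a, p s a * rlb s a) - (∑ s, ∑ a, p s a * rub s a)
          + γ * ∑ s, ∑ a, p s a * ∑ s', τ s a s' * v s' := by
      rw [Finset.sum_congr rfl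
        (fun s _ => Finset.sum_congr rfl (fun a _ => hexp s a))]
      simp only [Finset.sum_add_distrib, Finset.sum_sub_distrib, ← Finset.mul_sum]
      rw [hK]
    have h3 : ∑ s, dπ s * (v s - ∑ a, π s a * q s a)
        = (∑ s, dπ s * v s) - ∑ s, ∑ a, p s a * q s a := by
      rw [← Finset.sum_sub_distrib]
      refine Finset.sum_congr rfl fun s _ => ?_
      rw [mul_sub, Finset.mul_sum]
      congr 1
      exact Finset.sum_congr rfl fun a _ => by simp only [hp]; ring
    have h4 : ∑ s, ∑ a, (rlb s a * (p s a - plb s a) + rub s a * (pub s a - p s a))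
        = (∑ s, ∑ a, p s a * rlb s a) - (∑ s, ∑ a, rlb s a * plb s a)
          + ((∑ s, ∑ a, rub s a * pub s a) - ∑ s, ∑ a, p s a * rub s a) := by
      rw [Finset.sum_congr rfl (fun s (_ : s ∈ univ) => Finset.sum_congr rfl
        (fun a _ => show rlb s a * (p s a - plb s a) + rub s a * (pub s a - p s a)
          = p s a * rlb s a - rlb s a * plb s a + (rub s a * pub s a - p s a * rub s a)
          from by ring))]
      simp only [Finset.sum_add_distrib, Finset.sum_sub_distrib]
    rw [hflow v, h3, h4, h2]
    ring
  -- optimality forces the complementary-slackness sum to vanish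
  set qb : S → A → ℝ := fun s a => ∑ s', τ s a s' *
    (r s a s' + (0 : ℝ) - (0 : ℝ) + γ * vb s') with hqb
  have hqb' : ∀ s, ∑ a, π s a * qb s a = vb s := by
    intro s
    rw [hvb s]
    refine Finset.sum_congr rfl fun a _ => ?_
    congr 1
    exact Finset.sum_congr rfl fun s' _ => by ring
  have hbarObj : ∑ s, ι s * ((1 - γ) * vb s) = K := by
    have := key vb qb (fun _ _ => 0) (fun _ _ => 0) (fun s a => rfl)
    simpa [hqb'] using this
  have hstar := key vStar qStar rlbStar rubStar hfq
  have hopt := hOpt vb qb (fun _ _ => 0) (fun _ _ => 0)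
    ⟨fun s => le_of_eq (hqb' s), fun s a => rfl, fun _ _ => le_refl 0, fun _ _ => le_refl 0⟩
  simp only [zero_mul, Finset.sum_const_zero, sub_zero, add_zero] at hopt
  rw [hbarObj] at hopt
  rw [hstar] at hopt
  have hE : 0 ≤ ∑ s, dπ s * (vStar s - ∑ a, π s a * qStar s a) :=
    Finset.sum_nonneg fun s _ => mul_nonneg (hd0 s) (by linarith [hfv s])
  have hTnn : ∀ s ∈ (univ : Finset S), ∀ a ∈ (univ : Finset A),
      0 ≤ rlbStar s a * (p s a - plb s a) + rubStar s a * (pub s a - p s a) := by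
    intro s _ a _
    have h1 := (hSat s a).1
    have h2 := (hSat s a).2
    have := hfl s a
    have := hfu s a
    have : 0 ≤ rlbStar s a * (p s a - plb s a) :=
      mul_nonneg (hfl s a) (by simp only [hp]; linarith)
    have : 0 ≤ rubStar s a * (pub s a - p s a) :=
      mul_nonneg (hfu s a) (by simp only [hp]; linarith)
    linarith
  have hT0 : ∑ s, ∑ a, (rlbStar s a * (p s a - plb s a)
      + rubStar s a * (pub s a - p s a)) = 0 := by
    have hTnn' : 0 ≤ ∑ s, ∑ a, (rlbStar s a * (p s a - plb s a)
        + rubStar s a * (pub s a - p s a)) :=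
      Finset.sum_nonneg fun s hs => Finset.sum_nonneg fun a ha => hTnn s hs a ha
    linarith
  have hTeach : ∀ s a, rlbStar s a * (p s a - plb s a)
      + rubStar s a * (pub s a - p s a) = 0 := by
    intro s a
    have houter := (Finset.sum_eq_zero_iff_of_nonneg
      (fun s hs => Finset.sum_nonneg fun a ha => hTnn s hs a ha)).mp hT0 s (mem_univ s)
    exact (Finset.sum_eq_zero_iff_of_nonneg (fun a ha => hTnn s (mem_univ s) a ha)).mp
      houter a (mem_univ a)
  constructor
  · intro s a hlt
    have h := hTeach s a
    have h1 : 0 ≤ rlbStar s a * (p s a - plb s a) :=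
      mul_nonneg (hfl s a) (by simp only [hp]; linarith [(hSat s a).1])
    have h2 : 0 ≤ rubStar s a * (pub s a - p s a) :=
      mul_nonneg (hfu s a) (by simp only [hp]; linarith [(hSat s a).2])
    have h3 : rlbStar s a * (p s a - plb s a) = 0 := by linarith
    have h4 : p s a - plb s a ≠ 0 := by simp only [hp]; intro hc; linarith
    rcases mul_eq_zero.mp h3 with h5 | h5
    · exact h5
    · exact absurd h5 h4
  · intro s a hlt
    have h := hTeach s a
    have h1 : 0 ≤ rlbStar s a * (p s a - plb s a) :=
      mul_nonneg (hfl s a) (by simp only [hp]; linarith [(hSat s a).1])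
    have h2 : 0 ≤ rubStar s a * (pub s a - p s a) :=
      mul_nonneg (hfu s a) (by simp only [hp]; linarith [(hSat s a).2])
    have h3 : rubStar s a * (pub s a - p s a) = 0 := by linarith
    have h4 : pub s a - p s a ≠ 0 := by simp only [hp]; intro hc; linarith
    rcases mul_eq_zero.mp h3 with h5 | h5
    · exact h5
    · exact absurd h5 h4
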